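/- Let p ≥ 2 be a real number and x, y ∈ ℝ^l. Then the sum over s of second-order Taylor remainders satisfies: p · ∫_0^1 (1−α) [ ‖x + α y‖^{p−2} ‖y‖^2 + (p−2) · 1_{x+αy ≠ 0} · ‖x + α y‖^{p−4} · ⟨y, x + α y⟩^2 ] dα ≥ p · 3^{1−p} · ‖y‖^2 · ‖x‖^{p−2}. -/

import Mathlib

open scoped RealInnerProductSpace
open Classical MeasureTheory

section Aux

variable {l : ℕ}

private lemma contMap (x y : EuclideanSpace ℝ (Fin l)) :
    Continuous fun α : ℝ => x + α • y :=
  continuous_const.add (continuous_id.smul continuous_const)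

private lemma contNormRpow (x y : EuclideanSpace ℝ (Fin l)) {q : ℝ} (hq : 0 ≤ q) :
    Continuous fun α : ℝ => ‖x + α • y‖ ^ q :=
  (contMap x y).norm.rpow_const (fun _ => Or.inr hq)

private lemma contF1 (x y : EuclideanSpace ℝ (Fin l)) {q : ℝ} (hq : 0 ≤ q) :
    Continuous fun α : ℝ => (1 - α) * ‖x + α • y‖ ^ q :=
  (continuous_const.sub continuous_id).mul (contNormRpow x y hq)

/-- lower bound for a piece of the integral, given a pointwise lower bound `c` on the norm. -/
private lemma piece (x y : EuclideanSpace ℝ (Fin l)) {q c lo hi : ℝ} (hq : 0 ≤ q)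
    (hc : 0 ≤ c) (hlh : lo ≤ hi) (hhi : hi ≤ 1)
    (hpt : ∀ α ∈ Set.Icc lo hi, c ≤ ‖x + α • y‖) :
    c ^ q * ((hi - hi ^ 2 / 2) - (lo - lo ^ 2 / 2)) ≤
      ∫ α in lo..hi, (1 - α) * ‖x + α • y‖ ^ q := by
  have key : (∫ α in lo..hi, (1 - α) * c ^ q) ≤
      ∫ α in lo..hi, (1 - α) * ‖x + α • y‖ ^ q := by
    apply intervalIntegral.integral_mono_on hlh
      (((continuous_const.sub continuous_id).mul continuous_const).intervalIntegrable _ _)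
      ((contF1 x y hq).intervalIntegrable _ _)
    intro α hα
    have h1 : (0:ℝ) ≤ 1 - α := by
      have := hα.2; linarith
    exact mul_le_mul_of_nonneg_left (Real.rpow_le_rpow hc (hpt α hα) hq) h1
  have e1 : (∫ α in lo..hi, (1 - α) * c ^ q) =
      c ^ q * ((hi - hi ^ 2 / 2) - (lo - lo ^ 2 / 2)) := by
    have hfe : (fun α : ℝ => (1 - α) * c ^ q) = fun α : ℝ => c ^ q * (1 - α) := by
      funext α; ring
    rw [hfe, intervalIntegral.integral_const_mul,
      intervalIntegral.integral_sub intervalIntegrable_const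
        intervalIntegral.intervalIntegrable_id,
      integral_one, integral_id]
    ring
  linarith [key, e1]

/-- arithmetic step: convert `(m/3)^(p-2) * w` with `w ≥ 1/3` into `3^(1-p) * m^(p-2)`. -/
private lemma constStep {p m w : ℝ} (hm : 0 ≤ m) (hw : 1/3 ≤ w) :
    (3:ℝ) ^ (1 - p) * m ^ (p - 2) ≤ (m / 3) ^ (p - 2) * w := by
  have h3 : (0:ℝ) < (3:ℝ) ^ (p - 2) := Real.rpow_pos_of_pos (by norm_num) _
  have hmq : 0 ≤ m ^ (p - 2) := Real.rpow_nonneg hm _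
  have e : ((m / 3 : ℝ)) ^ (p - 2) = m ^ (p - 2) / 3 ^ (p - 2) :=
    Real.div_rpow hm (by norm_num) _
  have e2 : (3:ℝ) ^ (1 - p) * 3 ^ (p - 2) = 1/3 := by
    rw [← Real.rpow_add (by norm_num : (0:ℝ) < 3),
      show (1:ℝ) - p + (p - 2) = -1 by ring, Real.rpow_neg_one]
    norm_num
  rw [e, div_mul_eq_mul_div, le_div_iff₀ h3]
  calc (3:ℝ) ^ (1 - p) * m ^ (p - 2) * 3 ^ (p - 2)
      = m ^ (p - 2) * ((3:ℝ) ^ (1 - p) * 3 ^ (p - 2)) := by ring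
    _ = m ^ (p - 2) * (1/3) := by rw [e2]
    _ ≤ m ^ (p - 2) * w := by nlinarith

private lemma normLower1 (x y : EuclideanSpace ℝ (Fin l)) (α : ℝ) :
    ‖x‖ - ‖α • y‖ ≤ ‖x + α • y‖ := by
  have : ‖x‖ ≤ ‖x + α • y‖ + ‖α • y‖ := by
    calc ‖x‖ = ‖(x + α • y) - α • y‖ := by rw [add_sub_cancel_right]
      _ ≤ ‖x + α • y‖ + ‖α • y‖ := norm_sub_le _ _
  linarith

private lemma normLower2 (x y : EuclideanSpace ℝ (Fin l)) (α : ℝ) :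
    ‖α • y‖ - ‖x‖ ≤ ‖x + α • y‖ := by
  have : ‖α • y‖ ≤ ‖x + α • y‖ + ‖x‖ := by
    calc ‖α • y‖ = ‖(x + α • y) - x‖ := by rw [add_sub_cancel_left]
      _ ≤ ‖x + α • y‖ + ‖x‖ := norm_sub_le _ _
  linarith

private lemma normSmul (y : EuclideanSpace ℝ (Fin l)) {α : ℝ} (hα : 0 ≤ α) :
    ‖α • y‖ = α * ‖y‖ := by
  rw [norm_smul, Real.norm_eq_abs, abs_of_nonneg hα]

/-- The core estimate: `∫₀¹ (1-α)‖x+αy‖^{p-2} dα ≥ 3^{1-p} ‖x‖^{p-2}`. -/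
private lemma core (p : ℝ) (hp : 2 ≤ p) (x y : EuclideanSpace ℝ (Fin l)) :
    (3:ℝ) ^ (1 - p) * ‖x‖ ^ (p - 2) ≤
      ∫ α in (0:ℝ)..1, (1 - α) * ‖x + α • y‖ ^ (p - 2) := by
  have hq : (0:ℝ) ≤ p - 2 := by linarith
  set m := ‖x‖ with hm
  set s := ‖y‖ with hs
  have hm0 : 0 ≤ m := norm_nonneg _
  have hs0 : 0 ≤ s := norm_nonneg _
  have hint : ∀ a b : ℝ, IntervalIntegrable
      (fun α : ℝ => (1 - α) * ‖x + α • y‖ ^ (p - 2)) volume a b :=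
    fun a b => (contF1 x y hq).intervalIntegrable a b
  by_cases hx : x = 0
  · subst hx
    simp only [norm_zero] at hm
    by_cases hp2 : p = 2
    · subst hp2
      norm_num [hm]
      have e : (∫ α in (0:ℝ)..1, (1 - α)) = 1/2 := by
        rw [intervalIntegral.integral_sub intervalIntegrable_const
          intervalIntegral.intervalIntegrable_id, integral_one, integral_id]
        norm_num
      rw [e]
      norm_num
    · have hp2' : p - 2 ≠ 0 := fun h => hp2 (by linarith [sub_eq_zero.mp h])
      rw [hm, Real.zero_rpow hp2', mul_zero]
      apply intervalIntegral.integral_nonneg (by norm_num)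
      intro α hα
      have : (0:ℝ) ≤ 1 - α := by linarith [hα.2]
      positivity
  · have hmpos : 0 < m := norm_pos_iff.mpr hx
    rcases le_or_gt (3 * s) (2 * m) with hcase3 | h23
    · -- Case III : s small, norm ≥ m/3 on all of [0,1]
      have hpt : ∀ α ∈ Set.Icc (0:ℝ) 1, m / 3 ≤ ‖x + α • y‖ := by
        intro α hα
        have h1 := normLower1 x y α
        have h2 := normSmul y hα.1
        have : α * s ≤ s := by nlinarith [hα.2]
        rw [h2] at h1
        linarith
      have := piece x y hq (by positivity) (by norm_num) (le_refl 1) hpt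
      calc (3:ℝ) ^ (1 - p) * m ^ (p - 2) ≤ (m/3) ^ (p-2) * (1/2) :=
            constStep hm0 (by norm_num)
        _ = (m/3) ^ (p-2) * ((1 - 1^2/2) - (0 - 0^2/2)) := by norm_num
        _ ≤ _ := this
    · have hspos : 0 < s := by nlinarith
      set u := 2 * m / (3 * s) with hu
      have hupos : 0 < u := by positivity
      have hus : u * s = 2 * m / 3 := by rw [hu]; field_simp
      have hptleft : ∀ α ∈ Set.Icc (0:ℝ) u, m / 3 ≤ ‖x + α • y‖ := by
        intro α hα
        have h1 := normLower1 x y α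
        have h2 := normSmul y hα.1
        have : α * s ≤ u * s := by nlinarith [hα.2]
        rw [h2] at h1; rw [hus] at this
        linarith
      rcases le_or_gt (3 * s) (4 * m) with hcase2 | h34
      · -- Case II : 1/2 ≤ u ≤ 1
        have hu1 : u ≤ 1 := by rw [hu, div_le_one (by positivity)]; linarith
        have hu2 : 1/2 ≤ u := by
          rw [hu, le_div_iff₀ (by positivity)]; linarith
        have hsplit := intervalIntegral.integral_add_adjacent_intervals
          (hint 0 u) (hint u 1)
        have hA := piece x y hq (by positivity) hupos.le hu1 hptleft
        have hB : (0:ℝ) ≤ ∫ α in u..1, (1 - α) * ‖x + α • y‖ ^ (p - 2) := by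
          apply intervalIntegral.integral_nonneg hu1
          intro α hα
          have : (0:ℝ) ≤ 1 - α := by linarith [hα.2]
          positivity
        have hw : 1/3 ≤ (u - u^2/2) - (0 - 0^2/2) := by nlinarith
        calc (3:ℝ) ^ (1 - p) * m ^ (p - 2)
            ≤ (m/3) ^ (p-2) * ((u - u^2/2) - (0 - 0^2/2)) := constStep hm0 hw
          _ ≤ ∫ α in (0:ℝ)..u, (1 - α) * ‖x + α • y‖ ^ (p - 2) := hA
          _ ≤ _ := by linarith [hsplit]
      · -- Case I : u < 1/2, use [0,u] and [2u,1]
        have hu12 : u < 1/2 := by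
          rw [hu, div_lt_iff₀ (by positivity)]; linarith
        have h2u1 : 2 * u ≤ 1 := by linarith
        have hptright : ∀ α ∈ Set.Icc (2*u) 1, m / 3 ≤ ‖x + α • y‖ := by
          intro α hα
          have h1 := normLower2 x y α
          have hα0 : 0 ≤ α := le_trans (by positivity) hα.1
          have h2 := normSmul y hα0
          have : 2 * u * s ≤ α * s := by nlinarith [hα.1]
          rw [h2] at h1
          have h4 : 2 * (u * s) ≤ α * s := by linarith
          rw [hus] at h4
          linarith
        have hsplit1 := intervalIntegral.integral_add_adjacent_intervals
          (hint 0 u) (hint u 1)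
        have hsplit2 := intervalIntegral.integral_add_adjacent_intervals
          (hint u (2*u)) (hint (2*u) 1)
        have hA := piece x y hq (by positivity) hupos.le (by linarith) hptleft
        have hB : (0:ℝ) ≤ ∫ α in u..(2*u), (1 - α) * ‖x + α • y‖ ^ (p - 2) := by
          apply intervalIntegral.integral_nonneg (by linarith)
          intro α hα
          have : (0:ℝ) ≤ 1 - α := by linarith [hα.2]
          positivity
        have hC := piece x y hq (by positivity) h2u1 (le_refl 1) hptright
        have hw : 1/3 ≤ ((u - u^2/2) - (0 - 0^2/2)) + ((1 - 1^2/2) - (2*u - (2*u)^2/2)) := by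
          nlinarith [sq_nonneg (3*u - 1)]
        calc (3:ℝ) ^ (1 - p) * m ^ (p - 2)
            ≤ (m/3) ^ (p-2) * (((u - u^2/2) - (0 - 0^2/2)) +
                ((1 - 1^2/2) - (2*u - (2*u)^2/2))) := constStep hm0 hw
          _ = (m/3) ^ (p-2) * ((u - u^2/2) - (0 - 0^2/2)) +
              (m/3) ^ (p-2) * ((1 - 1^2/2) - (2*u - (2*u)^2/2)) := by ring
          _ ≤ (∫ α in (0:ℝ)..u, (1 - α) * ‖x + α • y‖ ^ (p - 2)) +
              (∫ α in (2*u)..1, (1 - α) * ‖x + α • y‖ ^ (p - 2)) := add_le_add hA hC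
          _ ≤ _ := by linarith [hsplit1, hsplit2]

end Aux

theorem taylor_remainder_jump_estimate
    (p : ℝ) (hp : 2 ≤ p) (l : ℕ) (x y : EuclideanSpace ℝ (Fin l)) :
    p * (3 : ℝ) ^ (1 - p) * ‖y‖ ^ 2 * ‖x‖ ^ (p - 2) ≤
      p * ∫ α in (0:ℝ)..1, (1 - α) *
        (‖x + α • y‖ ^ (p - 2) * ‖y‖ ^ 2 +
          (p - 2) * (if x + α • y ≠ 0 then 1 else 0) * ‖x + α • y‖ ^ (p - 4) *
            ⟪y, x + α • y⟫ ^ 2) := by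
  have hq : (0:ℝ) ≤ p - 2 := by linarith
  set F : ℝ → ℝ := fun α => (1 - α) *
    (‖x + α • y‖ ^ (p - 2) * ‖y‖ ^ 2 +
      (p - 2) * (if x + α • y ≠ 0 then 1 else 0) * ‖x + α • y‖ ^ (p - 4) *
        ⟪y, x + α • y⟫ ^ 2) with hF
  set F1 : ℝ → ℝ := fun α => (1 - α) * (‖x + α • y‖ ^ (p - 2) * ‖y‖ ^ 2) with hF1
  -- key inner-term bound
  have hT2 : ∀ α : ℝ, (if x + α • y ≠ 0 then (1:ℝ) else 0) * ‖x + α • y‖ ^ (p - 4) *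
      ⟪y, x + α • y⟫ ^ 2 ≤ ‖x + α • y‖ ^ (p - 2) * ‖y‖ ^ 2 := by
    intro α
    by_cases hz : x + α • y = 0
    · simp [hz]
      positivity
    · rw [if_pos hz, one_mul]
      have hzpos : 0 < ‖x + α • y‖ := norm_pos_iff.mpr hz
      have hin : ⟪y, x + α • y⟫ ^ 2 ≤ ‖y‖ ^ 2 * ‖x + α • y‖ ^ 2 := by
        have := abs_real_inner_le_norm y (x + α • y)
        nlinarith [this, abs_nonneg ⟪y, x + α • y⟫, sq_abs ⟪y, x + α • y⟫]
      calc ‖x + α • y‖ ^ (p - 4) * ⟪y, x + α • y⟫ ^ 2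
          ≤ ‖x + α • y‖ ^ (p - 4) * (‖y‖ ^ 2 * ‖x + α • y‖ ^ 2) := by
            apply mul_le_mul_of_nonneg_left hin (Real.rpow_nonneg (norm_nonneg _) _)
        _ = (‖x + α • y‖ ^ (p - 4) * ‖x + α • y‖ ^ ((2:ℕ):ℝ)) * ‖y‖ ^ 2 := by
            rw [Real.rpow_natCast]; ring
        _ = ‖x + α • y‖ ^ (p - 2) * ‖y‖ ^ 2 := by
            rw [← Real.rpow_add hzpos, show p - 4 + ((2:ℕ):ℝ) = p - 2 by push_cast; ring]
  have hT2nn : ∀ α : ℝ, 0 ≤ (p - 2) * (if x + α • y ≠ 0 then (1:ℝ) else 0) *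
      ‖x + α • y‖ ^ (p - 4) * ⟪y, x + α • y⟫ ^ 2 := by
    intro α
    by_cases hz : x + α • y = 0
    · simp [hz]
    · rw [if_pos hz, mul_one]
      positivity
  -- integrability of F
  have hFmeas : Measurable F := by
    have hmap : Continuous fun α : ℝ => x + α • y :=
      continuous_const.add (continuous_id.smul continuous_const)
    have h1 : Measurable fun α : ℝ => ‖x + α • y‖ ^ (p - 2) :=
      (hmap.norm.measurable).pow measurable_const
    have h2 : Measurable fun α : ℝ => ‖x + α • y‖ ^ (p - 4) :=
      (hmap.norm.measurable).pow measurable_const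
    have hset : MeasurableSet {α : ℝ | x + α • y ≠ 0} :=
      (hmap.measurable (measurableSet_singleton 0).compl)
    have hχ : Measurable fun α : ℝ => (if x + α • y ≠ 0 then (1:ℝ) else 0) :=
      Measurable.ite hset measurable_const measurable_const
    have hinner : Measurable fun α : ℝ => ⟪y, x + α • y⟫ ^ 2 :=
      ((Continuous.inner continuous_const hmap).measurable).pow measurable_const
    exact ((measurable_const.sub measurable_id).mul
      ((h1.mul measurable_const).add
        (((measurable_const.mul hχ).mul h2).mul hinner)))
  have hbd : ∀ α ∈ Set.Icc (0:ℝ) 1, ‖F α‖ ≤ (p - 1) * ((‖x‖ + ‖y‖) ^ (p-2) * ‖y‖ ^ 2) := by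
    intro α hα
    have hzb : ‖x + α • y‖ ≤ ‖x‖ + ‖y‖ := by
      have h1 : ‖x + α • y‖ ≤ ‖x‖ + ‖α • y‖ := norm_add_le _ _
      have h2 : ‖α • y‖ = α * ‖y‖ := by
        rw [norm_smul, Real.norm_eq_abs, abs_of_nonneg hα.1]
      have : α * ‖y‖ ≤ ‖y‖ := by nlinarith [hα.2, norm_nonneg y]
      linarith
    have hrb : ‖x + α • y‖ ^ (p-2) ≤ (‖x‖ + ‖y‖) ^ (p-2) :=
      Real.rpow_le_rpow (norm_nonneg _) hzb hq
    have hFnn : 0 ≤ F α := by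
      have h1 : (0:ℝ) ≤ 1 - α := by linarith [hα.2]
      have h2 := hT2nn α
      have : (0:ℝ) ≤ ‖x + α • y‖ ^ (p - 2) * ‖y‖ ^ 2 := by positivity
      rw [hF]
      exact mul_nonneg h1 (by linarith)
    rw [Real.norm_eq_abs, abs_of_nonneg hFnn, hF]
    have h1 : (0:ℝ) ≤ 1 - α := by linarith [hα.2]
    have h1' : 1 - α ≤ 1 := by linarith [hα.1]
    have hs1 : ‖x + α • y‖ ^ (p - 2) * ‖y‖ ^ 2 ≤ (‖x‖ + ‖y‖) ^ (p-2) * ‖y‖ ^ 2 := by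
      apply mul_le_mul_of_nonneg_right hrb (by positivity)
    have hs2 : (p - 2) * (if x + α • y ≠ 0 then (1:ℝ) else 0) * ‖x + α • y‖ ^ (p - 4) *
        ⟪y, x + α • y⟫ ^ 2 ≤ (p - 2) * ((‖x‖ + ‖y‖) ^ (p-2) * ‖y‖ ^ 2) := by
      have := hT2 α
      calc (p - 2) * (if x + α • y ≠ 0 then (1:ℝ) else 0) * ‖x + α • y‖ ^ (p - 4) *
          ⟪y, x + α • y⟫ ^ 2
          = (p - 2) * ((if x + α • y ≠ 0 then (1:ℝ) else 0) * ‖x + α • y‖ ^ (p - 4) *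
            ⟪y, x + α • y⟫ ^ 2) := by ring
        _ ≤ (p - 2) * (‖x + α • y‖ ^ (p - 2) * ‖y‖ ^ 2) :=
            mul_le_mul_of_nonneg_left this hq
        _ ≤ (p - 2) * ((‖x‖ + ‖y‖) ^ (p-2) * ‖y‖ ^ 2) :=
            mul_le_mul_of_nonneg_left hs1 hq
    have hsum : ‖x + α • y‖ ^ (p - 2) * ‖y‖ ^ 2 +
        (p - 2) * (if x + α • y ≠ 0 then (1:ℝ) else 0) * ‖x + α • y‖ ^ (p - 4) *
          ⟪y, x + α • y⟫ ^ 2 ≤ (p-1) * ((‖x‖ + ‖y‖) ^ (p-2) * ‖y‖ ^ 2) := by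
      have : (1:ℝ) * ((‖x‖ + ‖y‖) ^ (p-2) * ‖y‖ ^ 2) + (p - 2) * ((‖x‖ + ‖y‖) ^ (p-2) * ‖y‖ ^ 2)
          = (p-1) * ((‖x‖ + ‖y‖) ^ (p-2) * ‖y‖ ^ 2) := by ring
      linarith
    have hsumnn : 0 ≤ ‖x + α • y‖ ^ (p - 2) * ‖y‖ ^ 2 +
        (p - 2) * (if x + α • y ≠ 0 then (1:ℝ) else 0) * ‖x + α • y‖ ^ (p - 4) *
          ⟪y, x + α • y⟫ ^ 2 := by
      have := hT2nn α
      have h0 : (0:ℝ) ≤ ‖x + α • y‖ ^ (p - 2) * ‖y‖ ^ 2 := by positivity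
      linarith
    calc (1 - α) * (‖x + α • y‖ ^ (p - 2) * ‖y‖ ^ 2 +
          (p - 2) * (if x + α • y ≠ 0 then (1:ℝ) else 0) * ‖x + α • y‖ ^ (p - 4) *
            ⟪y, x + α • y⟫ ^ 2)
        ≤ 1 * (‖x + α • y‖ ^ (p - 2) * ‖y‖ ^ 2 +
          (p - 2) * (if x + α • y ≠ 0 then (1:ℝ) else 0) * ‖x + α • y‖ ^ (p - 4) *
            ⟪y, x + α • y⟫ ^ 2) := mul_le_mul_of_nonneg_right h1' hsumnn
      _ ≤ (p - 1) * ((‖x‖ + ‖y‖) ^ (p-2) * ‖y‖ ^ 2) := by rw [one_mul]; exact hsum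
  have hFint : IntervalIntegrable F volume 0 1 := by
    rw [intervalIntegrable_iff]
    apply Integrable.mono' (g := fun _ => (p - 1) * ((‖x‖ + ‖y‖) ^ (p-2) * ‖y‖ ^ 2))
    · exact (integrableOn_const_iff (by finiteness)).mpr (Or.inr
        (by rw [Set.uIoc_of_le (by norm_num : (0:ℝ) ≤ 1)]; exact measure_Ioc_lt_top))
    · exact hFmeas.aestronglyMeasurable.restrict
    · refine (ae_restrict_iff' measurableSet_uIoc).mpr (ae_of_all _ ?_)
      intro α hα
      rw [Set.uIoc_of_le (by norm_num : (0:ℝ) ≤ 1)] at hα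
      exact hbd α ⟨hα.1.le, hα.2⟩
  have hF1int : IntervalIntegrable F1 volume 0 1 := by
    have hmap : Continuous fun α : ℝ => x + α • y :=
      continuous_const.add (continuous_id.smul continuous_const)
    exact (((continuous_const.sub continuous_id).mul
      ((hmap.norm.rpow_const (fun _ => Or.inr hq)).mul continuous_const)).intervalIntegrable _ _)
  have hmono : (∫ α in (0:ℝ)..1, F1 α) ≤ ∫ α in (0:ℝ)..1, F α := by
    apply intervalIntegral.integral_mono_on (by norm_num) hF1int hFint
    intro α hα
    have h1 : (0:ℝ) ≤ 1 - α := by linarith [hα.2]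
    simp only [hF1, hF]
    nlinarith [mul_nonneg h1 (hT2nn α)]
  have hF1eq : (∫ α in (0:ℝ)..1, F1 α) =
      ‖y‖ ^ 2 * ∫ α in (0:ℝ)..1, (1 - α) * ‖x + α • y‖ ^ (p - 2) := by
    rw [← intervalIntegral.integral_const_mul]
    apply intervalIntegral.integral_congr
    intro α _
    simp only [hF1]; ring
  have hcore := core p hp x y
  have hkey : (3:ℝ) ^ (1 - p) * ‖y‖ ^ 2 * ‖x‖ ^ (p - 2) ≤ ∫ α in (0:ℝ)..1, F α := by
    calc (3:ℝ) ^ (1 - p) * ‖y‖ ^ 2 * ‖x‖ ^ (p - 2)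
        = ‖y‖ ^ 2 * ((3:ℝ) ^ (1 - p) * ‖x‖ ^ (p - 2)) := by ring
      _ ≤ ‖y‖ ^ 2 * ∫ α in (0:ℝ)..1, (1 - α) * ‖x + α • y‖ ^ (p - 2) :=
          mul_le_mul_of_nonneg_left hcore (by positivity)
      _ = ∫ α in (0:ℝ)..1, F1 α := hF1eq.symm
      _ ≤ ∫ α in (0:ℝ)..1, F α := hmono
  have hp0 : (0:ℝ) ≤ p := by linarith
  calc p * (3 : ℝ) ^ (1 - p) * ‖y‖ ^ 2 * ‖x‖ ^ (p - 2)
      = p * ((3:ℝ) ^ (1 - p) * ‖y‖ ^ 2 * ‖x‖ ^ (p - 2)) := by ring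
    _ ≤ p * ∫ α in (0:ℝ)..1, F α := mul_le_mul_of_nonneg_left hkey hp0
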